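/- Let p be a joint distribution on S × A, and for a constant λ ∈ [0,1] define the joint distribution q(s,a) = p(s) · [λ p(a) + (1−λ) p(a|s)]. Then the mutual information under q satisfies I_q(s,a) ≤ (1−λ) I_p(s,a). -/

import Mathlib

open Finset

/-- Mutual information of a joint pmf on `S × A` (natural log). -/
noncomputable def MI2 {S A : Type*} [Fintype S] [Fintype A] (r : S → A → ℝ) : ℝ :=
  ∑ s, ∑ a, r s a * Real.log (r s a / ((∑ a', r s a') * (∑ s', r s' a)))

lemma key_ineq (c d x l : ℝ) (hc : 0 < c) (hd : 0 < d) (hx : 0 < x)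
    (hl0 : 0 ≤ l) (hl1 : l ≤ 1) :
    (c * (l * d + (1 - l) * (x / c))) *
        Real.log ((c * (l * d + (1 - l) * (x / c))) / (c * d))
      ≤ (1 - l) * (x * Real.log (x / (c * d))) := by
  have hcd : 0 < c * d := mul_pos hc hd
  set t : ℝ := x / (c * d) with ht
  have htpos : 0 < t := div_pos hx hcd
  have hval : c * (l * d + (1 - l) * (x / c)) = (c * d) * (l + (1 - l) * t) := by
    rw [ht]
    field_simp
  have hml : 0 ≤ 1 - l := by linarith
  have hconv := Real.convexOn_mul_log.2 (Set.mem_Ici.mpr zero_le_one)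
      (Set.mem_Ici.mpr htpos.le) hl0 hml (by ring)
  simp only [smul_eq_mul, mul_one, Real.log_one, mul_zero, zero_add] at hconv
  have hx' : x = (c * d) * t := by rw [ht]; field_simp
  rw [hval, hx']
  have e1 : c * d * (l + (1 - l) * t) / (c * d) = l + (1 - l) * t :=
    mul_div_cancel_left₀ _ hcd.ne'
  have e2 : c * d * t / (c * d) = t := mul_div_cancel_left₀ _ hcd.ne'
  rw [e1]
  calc (c * d) * (l + (1 - l) * t) * Real.log (l + (1 - l) * t)
      = (c * d) * ((l + (1 - l) * t) * Real.log (l + (1 - l) * t)) := by ring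
    _ ≤ (c * d) * ((1 - l) * (t * Real.log t)) :=
        mul_le_mul_of_nonneg_left hconv hcd.le
    _ = (1 - l) * ((c * d) * t * Real.log t) := by ring

/-- For `q(s,a) = p(s)(λ p(a) + (1−λ) p(a|s))` with constant `λ ∈ [0,1]`,
the mutual information under `q` satisfies `I_q(s,a) ≤ (1−λ) I_p(s,a)`. -/
theorem stmt8 {S A : Type*} [Fintype S] [Fintype A] [Nonempty S] [Nonempty A]
    (p : S → A → ℝ)
    (hp : ∀ s a, 0 < p s a)
    (hsum : ∑ s, ∑ a, p s a = 1)
    (pS : S → ℝ) (hpS : ∀ s, pS s = ∑ a, p s a)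
    (pA : A → ℝ) (hpA : ∀ a, pA a = ∑ s, p s a)
    (pAcond : S → A → ℝ) (hpAcond : ∀ s a, pAcond s a = p s a / pS s)
    (l : ℝ) (hl0 : 0 ≤ l) (hl1 : l ≤ 1)
    (q : S → A → ℝ)
    (hq : ∀ s a, q s a = pS s * (l * pA a + (1 - l) * pAcond s a)) :
    MI2 q ≤ (1 - l) * MI2 p := by
  have hpSpos : ∀ s, 0 < pS s := fun s => by
    rw [hpS]; exact Finset.sum_pos (fun a _ => hp s a) univ_nonempty
  have hpApos : ∀ a, 0 < pA a := fun a => by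
    rw [hpA]; exact Finset.sum_pos (fun s _ => hp s a) univ_nonempty
  have hsumpS : ∑ s, pS s = 1 := by
    simp_rw [hpS]; exact hsum
  have hsumpA : ∑ a, pA a = 1 := by
    simp_rw [hpA]; rw [Finset.sum_comm]; exact hsum
  have hcondsum : ∀ s, ∑ a, pAcond s a = 1 := by
    intro s
    simp_rw [hpAcond]
    rw [← Finset.sum_div, ← hpS, div_self (hpSpos s).ne']
  have hqS : ∀ s, ∑ a, q s a = pS s := by
    intro s
    simp_rw [hq, ← Finset.mul_sum, Finset.sum_add_distrib, ← Finset.mul_sum,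
      hsumpA, hcondsum s]
    ring
  have hqA : ∀ a, ∑ s, q s a = pA a := by
    intro a
    have : ∀ s, q s a = l * (pS s * pA a) + (1 - l) * p s a := by
      intro s
      rw [hq, hpAcond]
      field_simp [(hpSpos s).ne']
    simp_rw [this, Finset.sum_add_distrib, ← Finset.mul_sum, ← Finset.sum_mul,
      hsumpS, ← hpA]
    ring
  have hMIq : MI2 q = ∑ s, ∑ a, q s a * Real.log (q s a / (pS s * pA a)) := by
    unfold MI2
    exact Finset.sum_congr rfl fun s _ => Finset.sum_congr rfl fun a _ => by
      rw [hqS, hqA]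
  have hMIp : MI2 p = ∑ s, ∑ a, p s a * Real.log (p s a / (pS s * pA a)) := by
    unfold MI2
    exact Finset.sum_congr rfl fun s _ => Finset.sum_congr rfl fun a _ => by
      rw [← hpS, ← hpA]
  rw [hMIq, hMIp, Finset.mul_sum]
  refine Finset.sum_le_sum fun s _ => ?_
  rw [Finset.mul_sum]
  refine Finset.sum_le_sum fun a _ => ?_
  have h := key_ineq (pS s) (pA a) (p s a) l (hpSpos s) (hpApos a) (hp s a) hl0 hl1
  rw [hq, hpAcond]
  exact h
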